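/- For a random vector x chosen uniformly from the boundary of the k-dimensional ℓ_p unit sphere {x : ‖x‖_p = 1} with p ≥ 1 and k ≥ 2, the probability that |x₁| ≥ r satisfies Pr[|x₁| ≥ r] ≤ (1 - r^p)^{(k-1)/p} for all r ∈ [0,1]. -/

import Mathlib

open MeasureTheory Set
open scoped ENNReal NNReal

private lemma abs_rpow_convex_aux {p : ℝ} (hp : 1 ≤ p) {u w a b : ℝ}
    (ha : 0 ≤ a) (hb : 0 ≤ b) (hab : a + b = 1) :
    |a * u + b * w| ^ p ≤ a * |u| ^ p + b * |w| ^ p := by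
  have hp0 : (0:ℝ) < p := lt_of_lt_of_le one_pos hp
  have h1 : |a * u + b * w| ≤ a * |u| + b * |w| := by
    calc |a * u + b * w| ≤ |a * u| + |b * w| := abs_add_le _ _
    _ = a * |u| + b * |w| := by rw [abs_mul, abs_mul, abs_of_nonneg ha, abs_of_nonneg hb]
  calc |a * u + b * w| ^ p ≤ (a * |u| + b * |w|) ^ p :=
        Real.rpow_le_rpow (abs_nonneg _) h1 hp0.le
    _ ≤ a * |u| ^ p + b * |w| ^ p := by
        have := (convexOn_rpow hp).2 (mem_Ici.mpr (abs_nonneg u)) (mem_Ici.mpr (abs_nonneg w))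
          ha hb hab
        simpa [smul_eq_mul] using this

private lemma v_lip_aux {p c a b : ℝ} (hp : 1 ≤ p) (hc : 0 ≤ c) (hb : 0 ≤ b) (hba : b ≤ a) :
    (a ^ p + c) ^ (1 / p) ≤ (b ^ p + c) ^ (1 / p) + (a - b) := by
  have hp0 : (0:ℝ) < p := lt_of_lt_of_le one_pos hp
  have hp0' : p ≠ 0 := ne_of_gt hp0
  have key := Real.Lp_add_le_of_nonneg (s := (Finset.univ : Finset (Fin 2)))
      (f := ![b, c ^ (1/p)]) (g := ![a - b, 0]) hp
      (by intro i _; fin_cases i <;> simp [hb, Real.rpow_nonneg hc])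
      (by intro i _; fin_cases i <;> simp [sub_nonneg.mpr hba])
  simp only [Fin.sum_univ_two, Matrix.cons_val_zero, Matrix.cons_val_one, Matrix.head_cons] at key
  have e1 : b + (a - b) = a := by ring
  have e2 : (c ^ (1/p) + 0 : ℝ) = c ^ (1/p) := by ring
  rw [e1, e2] at key
  rw [one_div, Real.rpow_inv_rpow hc hp0'] at key
  rw [Real.zero_rpow hp0', add_zero] at key
  rw [Real.rpow_rpow_inv (sub_nonneg.mpr hba) hp0'] at key
  simpa [one_div] using key


private lemma key_bound (m : ℕ) (p r : ℝ) (hp : 1 ≤ p) (hr0 : 0 ≤ r) (hr1 : r ≤ 1) :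
    μH[(m:ℝ)] {x : EuclideanSpace ℝ (Fin (m+1)) | (∑ i, |x i| ^ p) = 1 ∧ r ≤ x 0} ≤
      (ENNReal.ofReal ((1 - r ^ p) ^ (1/p))) ^ (m:ℝ) *
        μH[(m:ℝ)] {y : EuclideanSpace ℝ (Fin (m+1)) | (∑ i, |y i| ^ p) = 1 ∧ 0 ≤ y 0} := by
  have hp0 : (0:ℝ) < p := lt_of_lt_of_le one_pos hp
  have hp0' : p ≠ 0 := ne_of_gt hp0
  have hrp1 : r ^ p ≤ 1 := Real.rpow_le_one hr0 hr1 hp0.le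
  have hrpnn : 0 ≤ r ^ p := Real.rpow_nonneg hr0 p
  set t : ℝ := (1 - r ^ p) ^ (1/p) with htdef
  have ht0 : 0 ≤ t := Real.rpow_nonneg (by linarith) _
  have htp : t ^ p = 1 - r ^ p := by
    rw [htdef, one_div, Real.rpow_inv_rpow (by linarith) hp0']
  set v : ℝ → ℝ := fun s => (s ^ p + r ^ p) ^ (1/p) with hvdef
  have hvval : ∀ s : ℝ, 0 ≤ s → (v s) ^ p = s ^ p + r ^ p := by
    intro s hs
    rw [hvdef]; dsimp only
    rw [one_div, Real.rpow_inv_rpow (add_nonneg (Real.rpow_nonneg hs p) hrpnn) hp0']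
  have hvnn : ∀ s : ℝ, 0 ≤ s → 0 ≤ v s := fun s hs => Real.rpow_nonneg
    (add_nonneg (Real.rpow_nonneg hs p) hrpnn) _
  have hvmono : ∀ a b : ℝ, 0 ≤ b → b ≤ a → v b ≤ v a := by
    intro a b hb hba
    exact Real.rpow_le_rpow (add_nonneg (Real.rpow_nonneg hb p) hrpnn)
      (add_le_add_left (Real.rpow_le_rpow hb hba hp0.le) _) (by positivity)
  have hv0 : v 0 = r := by
    rw [hvdef]; dsimp only
    rw [Real.zero_rpow hp0', zero_add, one_div, Real.rpow_rpow_inv hr0 hp0']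
  have hvlip : ∀ a b : ℝ, 0 ≤ a → 0 ≤ b → |v a - v b| ≤ |a - b| := by
    intro a b ha hb
    rcases le_total b a with h | h
    · rw [abs_of_nonneg (by linarith [hvmono a b hb h]), abs_of_nonneg (by linarith)]
      have := v_lip_aux (c := r ^ p) hp hrpnn hb h
      simp only [hvdef]; linarith
    · rw [abs_of_nonpos (by linarith [hvmono b a ha h]), abs_of_nonpos (by linarith)]
      have := v_lip_aux (c := r ^ p) hp hrpnn ha h
      simp only [hvdef]; linarith
  set G : EuclideanSpace ℝ (Fin (m+1)) → EuclideanSpace ℝ (Fin (m+1)) :=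
    fun y => WithLp.toLp 2 (fun i => if i = (0 : Fin (m+1)) then v (t * y 0) else t * y i) with hGdef
  set D : Set (EuclideanSpace ℝ (Fin (m+1))) :=
    {y | (∑ i, |y i| ^ p) = 1 ∧ 0 ≤ y 0} with hDdef
  have hGlip : LipschitzOnWith t.toNNReal G D := by
    apply LipschitzOnWith.of_dist_le_mul
    intro x hx y hy
    rw [EuclideanSpace.dist_eq, EuclideanSpace.dist_eq,
      Real.coe_toNNReal t ht0]
    have hsum : ∑ i, dist (G x i) (G y i) ^ 2 ≤ t ^ 2 * ∑ i, dist (x i) (y i) ^ 2 := by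
      rw [Finset.mul_sum]
      apply Finset.sum_le_sum
      intro i _
      rcases eq_or_ne i 0 with rfl | hi
      · have hGx : G x 0 = v (t * x 0) := by simp [hGdef]
        have hGy : G y 0 = v (t * y 0) := by simp [hGdef]
        rw [hGx, hGy]
        have h1 : dist (v (t * x 0)) (v (t * y 0)) ≤ t * dist (x 0) (y 0) := by
          rw [Real.dist_eq, Real.dist_eq]
          calc |v (t * x 0) - v (t * y 0)| ≤ |t * x 0 - t * y 0| :=
                hvlip _ _ (mul_nonneg ht0 hx.2) (mul_nonneg ht0 hy.2)
          _ = t * |x 0 - y 0| := by rw [← mul_sub, abs_mul, abs_of_nonneg ht0]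
        calc dist (v (t * x 0)) (v (t * y 0)) ^ 2 ≤ (t * dist (x 0) (y 0)) ^ 2 :=
              pow_le_pow_left₀ dist_nonneg h1 2
        _ = t ^ 2 * dist (x 0) (y 0) ^ 2 := by ring
      · have hGx : G x i = t * x i := by simp [hGdef, hi]
        have hGy : G y i = t * y i := by simp [hGdef, hi]
        rw [hGx, hGy]
        have : dist (t * x i) (t * y i) = t * dist (x i) (y i) := by
          rw [Real.dist_eq, Real.dist_eq, ← mul_sub, abs_mul, abs_of_nonneg ht0]
        rw [this]; ring_nf; exact le_rfl
    calc Real.sqrt (∑ i, dist (G x i) (G y i) ^ 2)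
        ≤ Real.sqrt (t ^ 2 * ∑ i, dist (x i) (y i) ^ 2) := Real.sqrt_le_sqrt hsum
    _ = t * Real.sqrt (∑ i, dist (x i) (y i) ^ 2) := by
        rw [Real.sqrt_mul (sq_nonneg t), Real.sqrt_sq ht0]
  have hGimg : G '' D = {x : EuclideanSpace ℝ (Fin (m+1)) | (∑ i, |x i| ^ p) = 1 ∧ r ≤ x 0} := by
    apply Set.Subset.antisymm
    · rintro x ⟨y, ⟨hyS, hy0⟩, rfl⟩
      have hty : 0 ≤ t * y 0 := mul_nonneg ht0 hy0
      have hG0 : G y 0 = v (t * y 0) := by simp [hGdef]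
      constructor
      · rw [show (∑ i, |G y i| ^ p) = |G y 0| ^ p + ∑ j : Fin m, |G y j.succ| ^ p from
          Fin.sum_univ_succ _]
        rw [hG0, abs_of_nonneg (hvnn _ hty), hvval _ hty]
        have hterm : ∀ j : Fin m, |G y j.succ| ^ p = t ^ p * |y j.succ| ^ p := by
          intro j
          have : G y j.succ = t * y j.succ := by simp [hGdef, Fin.succ_ne_zero j]
          rw [this, abs_mul, abs_of_nonneg ht0, Real.mul_rpow ht0 (abs_nonneg _)]
        rw [Finset.sum_congr rfl (fun j _ => hterm j), ← Finset.mul_sum,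
          Real.mul_rpow ht0 hy0]
        have hyS' : y 0 ^ p + ∑ j : Fin m, |y j.succ| ^ p = 1 := by
          have := Fin.sum_univ_succ (fun i => |y i| ^ p)
          rw [hyS, abs_of_nonneg hy0] at this
          linarith [this]
        have hre : t ^ p * y 0 ^ p + r ^ p + t ^ p * ∑ j : Fin m, |y j.succ| ^ p
            = t ^ p * (y 0 ^ p + ∑ j : Fin m, |y j.succ| ^ p) + r ^ p := by ring
        rw [hre, hyS', mul_one, htp]; ring
      · show r ≤ G y 0
        rw [hG0, ← hv0]
        exact hvmono _ _ le_rfl hty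
    · rintro x ⟨hxS, hxr⟩
      have hx0 : 0 ≤ x 0 := le_trans hr0 hxr
      have hx0p : r ^ p ≤ x 0 ^ p := Real.rpow_le_rpow hr0 hxr hp0.le
      by_cases hone : r ^ p = 1
      · have hxle : |x 0| ^ p ≤ 1 := by
          rw [← hxS]
          exact Finset.single_le_sum (f := fun i => |x i| ^ p)
            (fun i _ => Real.rpow_nonneg (abs_nonneg _) p) (Finset.mem_univ 0)
        have hx0r : x 0 = r := by
          have h1 : x 0 ^ p ≤ r ^ p := by rw [hone]; rwa [abs_of_nonneg hx0] at hxle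
          have h2 : x 0 ^ p = r ^ p := le_antisymm h1 hx0p
          calc x 0 = (x 0 ^ p) ^ p⁻¹ := (Real.rpow_rpow_inv hx0 hp0').symm
          _ = (r ^ p) ^ p⁻¹ := by rw [h2]
          _ = r := Real.rpow_rpow_inv hr0 hp0'
        have hrest : ∀ j : Fin m, x j.succ = 0 := by
          have hsum0 : ∑ j : Fin m, |x j.succ| ^ p = 0 := by
            have h3 := Fin.sum_univ_succ (fun i => |x i| ^ p)
            rw [hxS, abs_of_nonneg hx0, hx0r, hone] at h3
            linarith [h3]
          intro j
          have hj := (Finset.sum_eq_zero_iff_of_nonneg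
            (fun i _ => Real.rpow_nonneg (abs_nonneg _) p)).mp hsum0 j (Finset.mem_univ j)
          have := (Real.rpow_eq_zero_iff_of_nonneg (abs_nonneg _)).mp hj
          exact abs_eq_zero.mp this.1
        have ht00 : t = 0 := by
          rw [htdef, hone, sub_self, Real.zero_rpow (one_div_ne_zero hp0')]
        refine ⟨x, ⟨hxS, hx0⟩, ?_⟩
        ext i
        induction i using Fin.cases with
        | zero =>
          have : G x 0 = v (t * x 0) := by simp [hGdef]
          rw [this, ht00, zero_mul, hv0, hx0r]
        | succ j =>
          have : G x j.succ = t * x j.succ := by simp [hGdef, Fin.succ_ne_zero j]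
          simp [this, ht00, hrest j]
      · have hrplt : r ^ p < 1 := lt_of_le_of_ne hrp1 hone
        have htpos : 0 < t := Real.rpow_pos_of_pos (by linarith) _
        have hxrp : 0 ≤ x 0 ^ p - r ^ p := by linarith
        set y : EuclideanSpace ℝ (Fin (m+1)) :=
          WithLp.toLp 2 (fun i => if i = (0 : Fin (m+1)) then (x 0 ^ p - r ^ p) ^ (1/p) / t else x i / t)
          with hydef
        have hy0 : y 0 = (x 0 ^ p - r ^ p) ^ (1/p) / t := by simp [hydef]
        have hys : ∀ j : Fin m, y j.succ = x j.succ / t := by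
          intro j; simp [hydef, Fin.succ_ne_zero j]
        have hy0nn : 0 ≤ y 0 := by
          rw [hy0]
          exact div_nonneg (Real.rpow_nonneg hxrp _) ht0
        have hysum : ∑ i, |y i| ^ p = 1 := by
          rw [show (∑ i, |y i| ^ p) = |y 0| ^ p + ∑ j : Fin m, |y j.succ| ^ p from
            Fin.sum_univ_succ _]
          rw [hy0]
          have h1 : |(x 0 ^ p - r ^ p) ^ (1/p) / t| ^ p = (x 0 ^ p - r ^ p) / t ^ p := by
            rw [abs_of_nonneg (div_nonneg (Real.rpow_nonneg hxrp _) ht0),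
              Real.div_rpow (Real.rpow_nonneg hxrp _) ht0,
              one_div, Real.rpow_inv_rpow hxrp hp0']
          rw [h1]
          have h2 : ∀ j : Fin m, |y j.succ| ^ p = |x j.succ| ^ p / t ^ p := by
            intro j
            rw [hys j, abs_div, abs_of_pos htpos, Real.div_rpow (abs_nonneg _) ht0]
          rw [Finset.sum_congr rfl fun j _ => h2 j, ← Finset.sum_div]
          have hxs : ∑ j : Fin m, |x j.succ| ^ p = 1 - x 0 ^ p := by
            have h3 := Fin.sum_univ_succ (fun i => |x i| ^ p)
            rw [hxS, abs_of_nonneg hx0] at h3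
            linarith [h3]
          rw [hxs, htp]
          have htpne : (1 : ℝ) - r ^ p ≠ 0 := by linarith
          field_simp
          ring
        refine ⟨y, ⟨hysum, hy0nn⟩, ?_⟩
        ext i
        induction i using Fin.cases with
        | zero =>
          have hgy : G y 0 = v (t * y 0) := by simp [hGdef]
          rw [hgy, hy0, mul_div_cancel₀ _ (ne_of_gt htpos)]
          show ((((x 0 ^ p - r ^ p) ^ (1/p)) ^ p + r ^ p) ^ (1/p)) = x 0
          rw [one_div, Real.rpow_inv_rpow hxrp hp0']
          rw [show x 0 ^ p - r ^ p + r ^ p = x 0 ^ p by ring]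
          exact Real.rpow_rpow_inv hx0 hp0'
        | succ j =>
          have hgy : G y j.succ = t * y j.succ := by simp [hGdef, Fin.succ_ne_zero j]
          rw [hgy, hys j, mul_div_cancel₀ _ (ne_of_gt htpos)]
  calc μH[(m:ℝ)] {x : EuclideanSpace ℝ (Fin (m+1)) | (∑ i, |x i| ^ p) = 1 ∧ r ≤ x 0}
      = μH[(m:ℝ)] (G '' D) := by rw [hGimg]
  _ ≤ (t.toNNReal : ℝ≥0∞) ^ (m:ℝ) * μH[(m:ℝ)] D :=
      hGlip.hausdorffMeasure_image_le (Nat.cast_nonneg m)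
  _ = (ENNReal.ofReal t) ^ (m:ℝ) * μH[(m:ℝ)] D := rfl


private lemma sigma_eq (m : ℕ) (p c : ℝ) :
    μH[(m:ℝ)] {x : EuclideanSpace ℝ (Fin (m+1)) | (∑ i, |x i| ^ p) = 1 ∧ x 0 ≤ -c} =
    μH[(m:ℝ)] {x : EuclideanSpace ℝ (Fin (m+1)) | (∑ i, |x i| ^ p) = 1 ∧ c ≤ x 0} := by
  set σ : EuclideanSpace ℝ (Fin (m+1)) → EuclideanSpace ℝ (Fin (m+1)) :=
    fun x => WithLp.toLp 2 (fun i => if i = (0 : Fin (m+1)) then -(x 0) else x i) with hσdef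
  have hσ0 : ∀ x, σ x 0 = -(x 0) := fun x => by simp [hσdef]
  have hσs : ∀ x (j : Fin m), σ x j.succ = x j.succ := fun x j => by
    simp [hσdef, Fin.succ_ne_zero j]
  have hiso : Isometry σ := by
    apply Isometry.of_dist_eq
    intro x y
    rw [EuclideanSpace.dist_eq, EuclideanSpace.dist_eq]
    apply congrArg
    rw [Fin.sum_univ_succ (f := fun i => dist (σ x i) (σ y i) ^ 2),
      Fin.sum_univ_succ (f := fun i => dist (x i) (y i) ^ 2), hσ0, hσ0, dist_neg_neg]
    simp only [hσs]
  have hsumσ : ∀ x : EuclideanSpace ℝ (Fin (m+1)), (∑ i, |σ x i| ^ p) = ∑ i, |x i| ^ p := by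
    intro x
    rw [Fin.sum_univ_succ (f := fun i => |σ x i| ^ p),
      Fin.sum_univ_succ (f := fun i => |x i| ^ p), hσ0, abs_neg]
    simp only [hσs]
  have hσσ : ∀ x, σ (σ x) = x := by
    intro x; ext i
    induction i using Fin.cases with
    | zero => rw [hσ0, hσ0, neg_neg]
    | succ j => rw [hσs, hσs]
  have himg : σ '' {x : EuclideanSpace ℝ (Fin (m+1)) | (∑ i, |x i| ^ p) = 1 ∧ c ≤ x 0}
      = {x : EuclideanSpace ℝ (Fin (m+1)) | (∑ i, |x i| ^ p) = 1 ∧ x 0 ≤ -c} := by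
    apply Set.Subset.antisymm
    · rintro z ⟨x, ⟨hx1, hx2⟩, rfl⟩
      refine ⟨by rw [hsumσ]; exact hx1, ?_⟩
      rw [hσ0]; linarith
    · rintro z ⟨hz1, hz2⟩
      refine ⟨σ z, ⟨by rw [hsumσ]; exact hz1, ?_⟩, hσσ z⟩
      rw [hσ0]; linarith
  rw [← himg, hiso.hausdorffMeasure_image (Or.inl (Nat.cast_nonneg m))]

private lemma slice_null (m : ℕ) (p : ℝ) (hp : 1 ≤ p) :
    μH[(m:ℝ)] {x : EuclideanSpace ℝ (Fin (m+1)) | (∑ i, |x i| ^ p) = 1 ∧ x 0 = 0} = 0 := by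
  have hp0 : (0:ℝ) < p := lt_of_lt_of_le one_pos hp
  have hp0' : p ≠ 0 := ne_of_gt hp0
  set emb : EuclideanSpace ℝ (Fin m) → EuclideanSpace ℝ (Fin (m+1)) :=
    fun z => WithLp.toLp 2 (Fin.cons (0:ℝ) (WithLp.ofLp z) : Fin (m+1) → ℝ) with hembdef
  have hembapp0 : ∀ z, emb z 0 = 0 := fun z => by simp [hembdef]
  have hembapps : ∀ z (j : Fin m), emb z j.succ = z j := fun z j => by simp [hembdef]
  have hiso : Isometry emb := by
    apply Isometry.of_dist_eq
    intro x y
    rw [EuclideanSpace.dist_eq, EuclideanSpace.dist_eq]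
    apply congrArg
    rw [Fin.sum_univ_succ (f := fun i => dist (emb x i) (emb y i) ^ 2), hembapp0, hembapp0]
    have hrest : ∑ j : Fin m, dist (emb x j.succ) (emb y j.succ) ^ 2
        = ∑ j : Fin m, dist (x j) (y j) ^ 2 :=
      Finset.sum_congr rfl fun j _ => by rw [hembapps, hembapps]
    rw [hrest, dist_self]
    ring
  have hsub : {x : EuclideanSpace ℝ (Fin (m+1)) | (∑ i, |x i| ^ p) = 1 ∧ x 0 = 0}
      ⊆ emb '' {z : EuclideanSpace ℝ (Fin m) | (∑ j, |z j| ^ p) = 1} := by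
    rintro x ⟨hx1, hx2⟩
    refine ⟨WithLp.toLp 2 (fun j => x j.succ), ?_, ?_⟩
    · have h3 := Fin.sum_univ_succ (fun i => |x i| ^ p)
      rw [hx1, hx2] at h3
      rw [abs_zero, Real.zero_rpow hp0', zero_add] at h3
      exact h3.symm
    · ext i
      induction i using Fin.cases with
      | zero => rw [hembapp0, hx2]
      | succ j => rw [hembapps]
  set Zpi : Set (Fin m → ℝ) := {w | (∑ j, |w j| ^ p) = 1} with hZpidef
  have himg2 : {z : EuclideanSpace ℝ (Fin m) | (∑ j, |z j| ^ p) = 1}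
      = (WithLp.equiv 2 (Fin m → ℝ)).symm '' Zpi := by
    apply Set.Subset.antisymm
    · intro z hz; exact ⟨(WithLp.equiv 2 (Fin m → ℝ)) z, hz, rfl⟩
    · rintro z ⟨w, hw, rfl⟩; exact hw
  have hlip2 : LipschitzWith ((Fintype.card (Fin m) : ℝ≥0) ^ ((1:ℝ≥0∞)/2).toReal)
      ((WithLp.equiv 2 (Fin m → ℝ)).symm) :=
    PiLp.lipschitzWith_toLp 2 (fun _ : Fin m => ℝ)
  have hvol : volume Zpi = 0 := by
    set B : Set (Fin m → ℝ) := {w | (∑ j, |w j| ^ p) ≤ 1} with hBdef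
    have hcf : ConvexOn ℝ Set.univ (fun w : Fin m → ℝ => ∑ j, |w j| ^ p) := by
      refine ⟨convex_univ, ?_⟩
      intro x _ y _ a b ha hb hab
      have h1 : ∀ j : Fin m, |(a • x + b • y) j| ^ p ≤ a * |x j| ^ p + b * |y j| ^ p := by
        intro j
        have happ : (a • x + b • y) j = a * x j + b * y j := rfl
        rw [happ]
        exact abs_rpow_convex_aux hp ha hb hab
      calc (∑ j, |(a • x + b • y) j| ^ p) ≤ ∑ j, (a * |x j| ^ p + b * |y j| ^ p) :=
            Finset.sum_le_sum fun j _ => h1 j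
      _ = a * ∑ j, |x j| ^ p + b * ∑ j, |y j| ^ p := by
          rw [Finset.sum_add_distrib, Finset.mul_sum, Finset.mul_sum]
      _ = a • (∑ j, |x j| ^ p) + b • (∑ j, |y j| ^ p) := by simp [smul_eq_mul]
    have hconv : Convex ℝ B := by
      have := hcf.convex_le 1
      simpa [hBdef, Set.sep_univ] using this
    have hfr : Zpi ⊆ frontier B := by
      intro w hw
      have hw' : (∑ j, |w j| ^ p) = 1 := hw
      have hwB : w ∈ B := le_of_eq hw'
      refine ⟨subset_closure hwB, ?_⟩
      intro hint
      obtain ⟨ε, hε, hball⟩ := Metric.isOpen_iff.mp isOpen_interior w hint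
      set δ : ℝ := ε / (2 * (‖w‖ + 1)) with hδdef
      have hnorm : (0:ℝ) < ‖w‖ + 1 := by positivity
      have hδpos : 0 < δ := by positivity
      have hmem : (1 + δ) • w ∈ Metric.ball w ε := by
        rw [Metric.mem_ball, dist_eq_norm]
        rw [show (1 + δ) • w - w = δ • w from by
          rw [add_smul, one_smul, add_sub_cancel_left]]
        rw [norm_smul, Real.norm_eq_abs, abs_of_pos hδpos]
        calc δ * ‖w‖ ≤ δ * (‖w‖ + 1) := by nlinarith [norm_nonneg w]
        _ = ε / 2 := by rw [hδdef]; field_simp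
        _ < ε := by linarith
      have hBmem : (1 + δ) • w ∈ B := interior_subset (hball hmem)
      have hBle : (∑ j, |((1 + δ) • w) j| ^ p) ≤ 1 := hBmem
      have hgt : (1:ℝ) < ∑ j, |((1 + δ) • w) j| ^ p := by
        have hterm : ∀ j : Fin m, |((1 + δ) • w) j| ^ p = (1 + δ) ^ p * |w j| ^ p := by
          intro j
          have happ : ((1 + δ) • w) j = (1 + δ) * w j := rfl
          rw [happ, abs_mul, abs_of_pos (by linarith),
            Real.mul_rpow (by linarith) (abs_nonneg _)]
        rw [Finset.sum_congr rfl fun j _ => hterm j, ← Finset.mul_sum, hw', mul_one]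
        exact (Real.one_lt_rpow_iff_of_pos (by linarith)).mpr (Or.inl ⟨by linarith, hp0⟩)
      linarith
    refine le_antisymm ?_ zero_le
    calc volume Zpi ≤ volume (frontier B) := measure_mono hfr
    _ = 0 := hconv.addHaar_frontier volume
  have e2 : μH[(m:ℝ)] {z : EuclideanSpace ℝ (Fin m) | (∑ j, |z j| ^ p) = 1} = 0 := by
    refine le_antisymm ?_ zero_le
    rw [himg2]
    calc μH[(m:ℝ)] ((WithLp.equiv 2 (Fin m → ℝ)).symm '' Zpi)
        ≤ (((Fintype.card (Fin m) : ℝ≥0) ^ ((1:ℝ≥0∞)/2).toReal : ℝ≥0) : ℝ≥0∞) ^ (m:ℝ)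
          * μH[(m:ℝ)] Zpi :=
          hlip2.hausdorffMeasure_image_le (Nat.cast_nonneg m) Zpi
    _ = 0 := by
        have hZ : μH[(m:ℝ)] Zpi = 0 := by
          have hcast : ((m:ℕ):ℝ) = ((Fintype.card (Fin m) : ℕ) : ℝ) := by simp
          rw [hcast, hausdorffMeasure_pi_real]
          exact hvol
        rw [hZ, mul_zero]
  refine le_antisymm ?_ zero_le
  calc μH[(m:ℝ)] {x : EuclideanSpace ℝ (Fin (m+1)) | (∑ i, |x i| ^ p) = 1 ∧ x 0 = 0}
      ≤ μH[(m:ℝ)] (emb '' {z : EuclideanSpace ℝ (Fin m) | (∑ j, |z j| ^ p) = 1}) :=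
        measure_mono hsub
  _ = μH[(m:ℝ)] {z : EuclideanSpace ℝ (Fin m) | (∑ j, |z j| ^ p) = 1} :=
        hiso.hausdorffMeasure_image (Or.inl (Nat.cast_nonneg m)) _
  _ = 0 := e2

theorem stmt_0 (k : ℕ) (hk : 2 ≤ k) (p r : ℝ) (hp : 1 ≤ p) (hr0 : 0 ≤ r) (hr1 : r ≤ 1) :
    (μH[(k : ℝ) - 1] {x : EuclideanSpace ℝ (Fin k) |
        (∑ i, |x i| ^ p) ^ (1 / p) = 1 ∧ r ≤ |x ⟨0, by omega⟩|}) ≤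
      ENNReal.ofReal ((1 - r ^ p) ^ (((k : ℝ) - 1) / p)) *
        μH[(k : ℝ) - 1] {x : EuclideanSpace ℝ (Fin k) | (∑ i, |x i| ^ p) ^ (1 / p) = 1} := by
  obtain ⟨m, rfl⟩ : ∃ m, k = m + 1 := ⟨k - 1, by omega⟩
  have hp0 : (0:ℝ) < p := lt_of_lt_of_le one_pos hp
  have hp0' : p ≠ 0 := ne_of_gt hp0
  have hcast : ((m + 1 : ℕ) : ℝ) - 1 = (m : ℝ) := by push_cast; ring
  rw [hcast]
  have h00 : (⟨0, by omega⟩ : Fin (m + 1)) = 0 := by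
    apply Fin.ext; simp
  rw [h00]
  have hiff : ∀ x : EuclideanSpace ℝ (Fin (m+1)),
      ((∑ i, |x i| ^ p) ^ (1/p) = 1 ↔ (∑ i, |x i| ^ p) = 1) := by
    intro x
    have hnn : 0 ≤ ∑ i, |x i| ^ p :=
      Finset.sum_nonneg fun i _ => Real.rpow_nonneg (abs_nonneg _) p
    constructor
    · intro h
      have h2 := congrArg (fun s : ℝ => s ^ p) h
      simp only at h2
      rw [one_div, Real.rpow_inv_rpow hnn hp0', Real.one_rpow] at h2
      exact h2
    · intro h; rw [h, Real.one_rpow]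
  have hsetA : {x : EuclideanSpace ℝ (Fin (m+1)) | (∑ i, |x i| ^ p) ^ (1 / p) = 1 ∧ r ≤ |x 0|}
      = {x : EuclideanSpace ℝ (Fin (m+1)) | (∑ i, |x i| ^ p) = 1 ∧ r ≤ |x 0|} := by
    ext x; exact and_congr_left' (hiff x)
  have hsetS : {x : EuclideanSpace ℝ (Fin (m+1)) | (∑ i, |x i| ^ p) ^ (1 / p) = 1}
      = {x : EuclideanSpace ℝ (Fin (m+1)) | (∑ i, |x i| ^ p) = 1} := by
    ext x; exact hiff x
  rw [hsetA, hsetS]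
  have hrp1 : r ^ p ≤ 1 := Real.rpow_le_one hr0 hr1 hp0.le
  have h1rp : (0:ℝ) ≤ 1 - r ^ p := by linarith
  -- coefficient identity
  have hTeq : ENNReal.ofReal ((1 - r ^ p) ^ ((m:ℝ) / p))
      = (ENNReal.ofReal ((1 - r ^ p) ^ (1/p))) ^ (m:ℝ) := by
    rw [ENNReal.ofReal_rpow_of_nonneg (Real.rpow_nonneg h1rp _) (Nat.cast_nonneg m)]
    congr 1
    rw [← Real.rpow_mul h1rp]
    congr 1
    ring
  rw [hTeq]
  set T : ℝ≥0∞ := (ENNReal.ofReal ((1 - r ^ p) ^ (1/p))) ^ (m:ℝ) with hTdef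
  -- the two key estimates
  have key : μH[(m:ℝ)] {x : EuclideanSpace ℝ (Fin (m+1)) | (∑ i, |x i| ^ p) = 1 ∧ r ≤ x 0}
      ≤ T * μH[(m:ℝ)] {y : EuclideanSpace ℝ (Fin (m+1)) | (∑ i, |y i| ^ p) = 1 ∧ 0 ≤ y 0} :=
    key_bound m p r hp hr0 hr1
  -- measurability
  have hcont : Continuous fun y : EuclideanSpace ℝ (Fin (m+1)) => ∑ i, |y i| ^ p := by
    apply continuous_finset_sum
    intro i _
    have h1 : Continuous fun y : EuclideanSpace ℝ (Fin (m+1)) => y i :=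
      (EuclideanSpace.proj (𝕜 := ℝ) i).continuous
    have h2 : Continuous fun a : ℝ => |a| ^ p := by
      rw [continuous_iff_continuousAt]
      intro a
      exact (Real.continuousAt_rpow_const _ _ (Or.inr hp0.le)).comp continuous_abs.continuousAt
    exact h2.comp h1
  have hmeasS : MeasurableSet {x : EuclideanSpace ℝ (Fin (m+1)) | (∑ i, |x i| ^ p) = 1} :=
    (measurableSet_singleton (1:ℝ)).preimage hcont.measurable
  have hmeaslt : MeasurableSet
      {x : EuclideanSpace ℝ (Fin (m+1)) | (∑ i, |x i| ^ p) = 1 ∧ x 0 < 0} := by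
    have heq : {x : EuclideanSpace ℝ (Fin (m+1)) | (∑ i, |x i| ^ p) = 1 ∧ x 0 < 0}
        = {x : EuclideanSpace ℝ (Fin (m+1)) | (∑ i, |x i| ^ p) = 1}
          ∩ ((fun y : EuclideanSpace ℝ (Fin (m+1)) => y 0) ⁻¹' Set.Iio 0) := rfl
    rw [heq]
    exact hmeasS.inter (measurableSet_Iio.preimage
      (EuclideanSpace.proj (𝕜 := ℝ) (0 : Fin (m+1))).continuous.measurable)
  -- the half-sphere measure relations
  have hDm : μH[(m:ℝ)] {x : EuclideanSpace ℝ (Fin (m+1)) | (∑ i, |x i| ^ p) = 1 ∧ 0 ≤ x 0}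
      = μH[(m:ℝ)] {x : EuclideanSpace ℝ (Fin (m+1)) | (∑ i, |x i| ^ p) = 1 ∧ x 0 ≤ 0} := by
    have h := sigma_eq m p 0
    rw [show {x : EuclideanSpace ℝ (Fin (m+1)) | (∑ i, |x i| ^ p) = 1 ∧ x 0 ≤ -0}
        = {x : EuclideanSpace ℝ (Fin (m+1)) | (∑ i, |x i| ^ p) = 1 ∧ x 0 ≤ 0} from by
      norm_num] at h
    exact h.symm
  have hDple : μH[(m:ℝ)] {x : EuclideanSpace ℝ (Fin (m+1)) | (∑ i, |x i| ^ p) = 1 ∧ 0 ≤ x 0}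
      ≤ μH[(m:ℝ)] {x : EuclideanSpace ℝ (Fin (m+1)) | (∑ i, |x i| ^ p) = 1 ∧ x 0 < 0} := by
    rw [hDm]
    calc μH[(m:ℝ)] {x : EuclideanSpace ℝ (Fin (m+1)) | (∑ i, |x i| ^ p) = 1 ∧ x 0 ≤ 0}
        ≤ μH[(m:ℝ)] ({x : EuclideanSpace ℝ (Fin (m+1)) | (∑ i, |x i| ^ p) = 1 ∧ x 0 < 0}
            ∪ {x : EuclideanSpace ℝ (Fin (m+1)) | (∑ i, |x i| ^ p) = 1 ∧ x 0 = 0}) := by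
          apply measure_mono
          rintro x ⟨h1, h2⟩
          rcases lt_or_eq_of_le h2 with h | h
          · exact Or.inl ⟨h1, h⟩
          · exact Or.inr ⟨h1, h⟩
    _ ≤ μH[(m:ℝ)] {x : EuclideanSpace ℝ (Fin (m+1)) | (∑ i, |x i| ^ p) = 1 ∧ x 0 < 0}
          + μH[(m:ℝ)] {x : EuclideanSpace ℝ (Fin (m+1)) | (∑ i, |x i| ^ p) = 1 ∧ x 0 = 0} :=
          measure_union_le _ _
    _ = μH[(m:ℝ)] {x : EuclideanSpace ℝ (Fin (m+1)) | (∑ i, |x i| ^ p) = 1 ∧ x 0 < 0} := by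
          rw [slice_null m p hp, add_zero]
  have hsum : μH[(m:ℝ)] {x : EuclideanSpace ℝ (Fin (m+1)) | (∑ i, |x i| ^ p) = 1 ∧ 0 ≤ x 0}
      + μH[(m:ℝ)] {x : EuclideanSpace ℝ (Fin (m+1)) | (∑ i, |x i| ^ p) = 1 ∧ x 0 < 0}
      = μH[(m:ℝ)] {x : EuclideanSpace ℝ (Fin (m+1)) | (∑ i, |x i| ^ p) = 1} := by
    rw [← measure_union ?_ hmeaslt]
    · congr 1
      ext x
      constructor
      · rintro (⟨h1, _⟩ | ⟨h1, _⟩) <;> exact h1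
      · intro h1
        rcases le_or_gt 0 (x 0) with h | h
        · exact Or.inl ⟨h1, h⟩
        · exact Or.inr ⟨h1, h⟩
    · rw [Set.disjoint_left]
      rintro x ⟨_, h2⟩ ⟨_, h4⟩
      linarith
  -- final chain
  calc μH[(m:ℝ)] {x : EuclideanSpace ℝ (Fin (m+1)) | (∑ i, |x i| ^ p) = 1 ∧ r ≤ |x 0|}
      ≤ μH[(m:ℝ)] ({x : EuclideanSpace ℝ (Fin (m+1)) | (∑ i, |x i| ^ p) = 1 ∧ r ≤ x 0}
          ∪ {x : EuclideanSpace ℝ (Fin (m+1)) | (∑ i, |x i| ^ p) = 1 ∧ x 0 ≤ -r}) := by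
        apply measure_mono
        rintro x ⟨h1, h2⟩
        rcases le_abs.mp h2 with h | h
        · exact Or.inl ⟨h1, h⟩
        · exact Or.inr ⟨h1, by linarith⟩
  _ ≤ μH[(m:ℝ)] {x : EuclideanSpace ℝ (Fin (m+1)) | (∑ i, |x i| ^ p) = 1 ∧ r ≤ x 0}
        + μH[(m:ℝ)] {x : EuclideanSpace ℝ (Fin (m+1)) | (∑ i, |x i| ^ p) = 1 ∧ x 0 ≤ -r} :=
        measure_union_le _ _
  _ = μH[(m:ℝ)] {x : EuclideanSpace ℝ (Fin (m+1)) | (∑ i, |x i| ^ p) = 1 ∧ r ≤ x 0}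
        + μH[(m:ℝ)] {x : EuclideanSpace ℝ (Fin (m+1)) | (∑ i, |x i| ^ p) = 1 ∧ r ≤ x 0} := by
        rw [sigma_eq m p r]
  _ ≤ T * μH[(m:ℝ)] {y : EuclideanSpace ℝ (Fin (m+1)) | (∑ i, |y i| ^ p) = 1 ∧ 0 ≤ y 0}
        + T * μH[(m:ℝ)] {y : EuclideanSpace ℝ (Fin (m+1)) | (∑ i, |y i| ^ p) = 1 ∧ 0 ≤ y 0} :=
        add_le_add key key
  _ = T * (μH[(m:ℝ)] {y : EuclideanSpace ℝ (Fin (m+1)) | (∑ i, |y i| ^ p) = 1 ∧ 0 ≤ y 0}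
        + μH[(m:ℝ)] {y : EuclideanSpace ℝ (Fin (m+1)) | (∑ i, |y i| ^ p) = 1 ∧ 0 ≤ y 0}) :=
        (mul_add _ _ _).symm
  _ ≤ T * (μH[(m:ℝ)] {y : EuclideanSpace ℝ (Fin (m+1)) | (∑ i, |y i| ^ p) = 1 ∧ 0 ≤ y 0}
        + μH[(m:ℝ)] {y : EuclideanSpace ℝ (Fin (m+1)) | (∑ i, |y i| ^ p) = 1 ∧ y 0 < 0}) :=
        mul_le_mul_right (add_le_add_right hDple _) T
  _ = T * μH[(m:ℝ)] {x : EuclideanSpace ℝ (Fin (m+1)) | (∑ i, |x i| ^ p) = 1} := by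
        rw [hsum]
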